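/- arXiv:1512.07400 — 2 statements merged into one kernel-verified Lean document; each statement's English description precedes it below -/
import Mathlib

section
/- Let f: Z^d → R with ‖Δ²f‖_∞ := sup_X max_{j,k} |Δ²_{jk} f(X)| < ∞. Then for all X ∈ Z^d and J ∈ Z^d, |f(X + J) − f(X) − Σ_{s=1}^d J_s Δ_s f(X)| ≤ (1/2)|J|_1 (|J|_1 + 1) ‖Δ²f‖_∞, where |J|_1 = Σ_s |J_s|. -/
open Finset

section Aux

variable {d : ℕ} (f : (Fin d → ℤ) → ℝ) (C : ℝ)

/-- The first difference operator. -/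
private def Dop (s : Fin d) (X : Fin d → ℤ) : ℝ := f (X + Pi.single s 1) - f X

private lemma sum_abs_sub_single (K : Fin d → ℤ) (t : Fin d) (m : ℤ) :
    ∑ u, |(K - Pi.single t m : Fin d → ℤ) u| = (∑ u, |K u|) - |K t| + |K t - m| := by
  have h : ∀ u : Fin d, |(K - Pi.single t m : Fin d → ℤ) u|
      = |K u| + (if u = t then |K t - m| - |K t| else 0) := by
    intro u
    by_cases h : u = t
    · subst h; simp [Pi.single_apply]
    · simp [Pi.single_apply, h]
  simp only [h, Finset.sum_add_distrib, Finset.sum_ite_eq', Finset.mem_univ, if_true]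
  ring

private lemma sum_abs_eq_zero_aux {K : Fin d → ℤ} (h : ∑ u, |K u| = 0) : K = 0 := by
  funext u
  have := (Finset.sum_eq_zero_iff_of_nonneg (fun u _ => abs_nonneg (K u))).1 h u (mem_univ u)
  simpa using this

private lemma sum_mul_sub (J : Fin d → ℤ) (t : Fin d) (m : ℤ) (g : Fin d → ℝ) :
    ∑ s, (((J - Pi.single t m : Fin d → ℤ) s : ℤ) : ℝ) * g s = (∑ s, (J s : ℝ) * g s) - m * g t := by
  have h : ∀ s : Fin d, (((J - Pi.single t m : Fin d → ℤ) s : ℤ) : ℝ) * g s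
      = (J s : ℝ) * g s - (if s = t then (m : ℝ) * g s else 0) := by
    intro s
    by_cases hs : s = t
    · subst hs; simp [Pi.single_apply]; push_cast; ring
    · simp [Pi.single_apply, hs]
  simp only [h, Finset.sum_sub_distrib, Finset.sum_ite_eq', Finset.mem_univ, if_true]

variable (hC : ∀ X : Fin d → ℤ, ∀ j k : Fin d,
      |f (X + Pi.single j 1 + Pi.single k 1) - f (X + Pi.single j 1)
        - f (X + Pi.single k 1) + f X| ≤ C)

include hC

private lemma Dstep (Y : Fin d → ℤ) (t s : Fin d) :
    |Dop f s (Y + Pi.single t 1) - Dop f s Y| ≤ C := by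
  have h := hC Y t s
  have e : Dop f s (Y + Pi.single t 1) - Dop f s Y
      = f (Y + Pi.single t 1 + Pi.single s 1) - f (Y + Pi.single t 1)
        - f (Y + Pi.single s 1) + f Y := by
    simp only [Dop]; ring
  rw [e]; exact h

private lemma lip : ∀ n : ℕ, ∀ K X : Fin d → ℤ, (∑ u, |K u|) = (n : ℤ) →
    ∀ s, |Dop f s (X + K) - Dop f s X| ≤ n * C := by
  intro n
  induction n with
  | zero =>
    intro K X hK s
    have hK0 : K = 0 := sum_abs_eq_zero_aux (by exact_mod_cast hK)
    simp [hK0]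
  | succ n ih =>
    intro K X hK s
    have hex : ∃ t, K t ≠ 0 := by
      by_contra h
      push_neg at h
      rw [funext h] at hK
      simp at hK
      omega
    obtain ⟨t, ht⟩ := hex
    rcases ht.lt_or_gt with hneg | hpos
    · -- K t < 0, move up by e_t
      set K' := K - Pi.single t (-1) with hK'def
      have hsum : ∑ u, |K' u| = (n : ℤ) := by
        rw [hK'def, sum_abs_sub_single, hK, abs_of_neg hneg,
          abs_of_nonpos (by omega : K t - (-1) ≤ 0)]
        push_cast; ring
      have harg : X + K' = (X + K) + Pi.single t 1 := by
        funext u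
        by_cases h : u = t <;> simp [hK'def, Pi.single_apply, h] <;> ring
      have h1 := Dstep f C hC (X + K) t s
      have h2 := ih K' X hsum s
      rw [harg] at h2
      have e : Dop f s (X + K) - Dop f s X
          = (Dop f s ((X + K) + Pi.single t 1) - Dop f s X)
            - (Dop f s ((X + K) + Pi.single t 1) - Dop f s (X + K)) := by ring
      rw [e, abs_le] at *
      push_cast
      constructor <;> linarith [h1.1, h1.2, h2.1, h2.2]
    · -- K t > 0, move down by e_t
      set K' := K - Pi.single t 1 with hK'def
      have hsum : ∑ u, |K' u| = (n : ℤ) := by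
        rw [hK'def, sum_abs_sub_single, hK, abs_of_pos hpos,
          abs_of_nonneg (by omega : (0:ℤ) ≤ K t - 1)]
        push_cast; ring
      have harg : X + K = (X + K') + Pi.single t 1 := by
        funext u
        by_cases h : u = t <;> simp [hK'def, Pi.single_apply, h] <;> ring
      have h1 := Dstep f C hC (X + K') t s
      have h2 := ih K' X hsum s
      have e : Dop f s (X + K) - Dop f s X
          = (Dop f s ((X + K') + Pi.single t 1) - Dop f s (X + K'))
            + (Dop f s (X + K') - Dop f s X) := by rw [harg]; ring
      rw [e, abs_le] at *
      push_cast
      constructor <;> linarith [h1.1, h1.2, h2.1, h2.2]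

private lemma main : ∀ n : ℕ, ∀ J X : Fin d → ℤ, (∑ u, |J u|) = (n : ℤ) →
    |f (X + J) - f X - ∑ s, (J s : ℝ) * Dop f s X| ≤ (1/2) * n * (n + 1) * C := by
  intro n
  induction n with
  | zero =>
    intro J X hJ
    have hJ0 : J = 0 := sum_abs_eq_zero_aux (by exact_mod_cast hJ)
    simp [hJ0]
  | succ n ih =>
    intro J X hJ
    have hex : ∃ t, J t ≠ 0 := by
      by_contra h
      push_neg at h
      rw [funext h] at hJ
      simp at hJ
      omega
    obtain ⟨t, ht⟩ := hex
    have hC0 : 0 ≤ C := le_trans (abs_nonneg _) (hC X t t)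
    rcases ht.lt_or_gt with hneg | hpos
    · -- J t < 0
      set J' := J - Pi.single t (-1) with hJ'def
      have hsum : ∑ u, |J' u| = (n : ℤ) := by
        rw [hJ'def, sum_abs_sub_single, hJ, abs_of_neg hneg,
          abs_of_nonpos (by omega : J t - (-1) ≤ 0)]
        push_cast; ring
      have harg : X + J' = (X + J) + Pi.single t 1 := by
        funext u
        by_cases h : u = t <;> simp [hJ'def, Pi.single_apply, h] <;> ring
      have h1 := lip f C hC (n + 1) J X hJ t
      have h2 := ih J' X hsum
      have hsub := sum_mul_sub J t (-1) (fun s => Dop f s X)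
      have e : f (X + J) - f X - ∑ s, (J s : ℝ) * Dop f s X
          = (f (X + J') - f X - ∑ s, (J' s : ℝ) * Dop f s X)
            - (Dop f t (X + J) - Dop f t X) := by
        rw [hJ'def] at harg ⊢
        rw [hsub, harg]
        simp only [Dop]
        push_cast
        ring
      have key : (1/2) * (n:ℝ) * (n + 1) * C + ((n:ℝ) + 1) * C
          = (1/2) * ((n:ℝ) + 1) * ((n:ℝ) + 1 + 1) * C := by ring
      rw [e, abs_le] at *
      push_cast at h1 ⊢
      constructor <;> linarith [h1.1, h1.2, h2.1, h2.2]
    · -- J t > 0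
      set J' := J - Pi.single t 1 with hJ'def
      have hsum : ∑ u, |J' u| = (n : ℤ) := by
        rw [hJ'def, sum_abs_sub_single, hJ, abs_of_pos hpos,
          abs_of_nonneg (by omega : (0:ℤ) ≤ J t - 1)]
        push_cast; ring
      have harg : X + J = (X + J') + Pi.single t 1 := by
        funext u
        by_cases h : u = t <;> simp [hJ'def, Pi.single_apply, h] <;> ring
      have h1 := lip f C hC n J' X hsum t
      have h2 := ih J' X hsum
      have hsub := sum_mul_sub J t 1 (fun s => Dop f s X)
      have e : f (X + J) - f X - ∑ s, (J s : ℝ) * Dop f s X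
          = (f (X + J') - f X - ∑ s, (J' s : ℝ) * Dop f s X)
            + (Dop f t (X + J') - Dop f t X) := by
        rw [hJ'def] at harg ⊢
        rw [hsub, harg]
        simp only [Dop]
        push_cast
        ring
      have key : (1/2) * (n:ℝ) * (n + 1) * C + (n:ℝ) * C + C
          = (1/2) * ((n:ℝ) + 1) * ((n:ℝ) + 1 + 1) * C := by ring
      rw [e, abs_le] at *
      push_cast
      constructor <;> linarith [h1.1, h1.2, h2.1, h2.2]

end Aux

/-- Multidimensional second-order Newton bound: if all second differences of
`f : ℤ^d → ℝ` are bounded by `C`, then for any `X, J ∈ ℤ^d`,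
`|f(X + J) − f(X) − Σ_s J_s Δ_s f(X)| ≤ (1/2)|J|₁(|J|₁+1) C`,
where `|J|₁ = Σ_s |J_s|`. -/
theorem stmt_9 {d : ℕ} (f : (Fin d → ℤ) → ℝ) (C : ℝ)
    (hC : ∀ X : Fin d → ℤ, ∀ j k : Fin d,
      |f (X + Pi.single j 1 + Pi.single k 1) - f (X + Pi.single j 1)
        - f (X + Pi.single k 1) + f X| ≤ C)
    (X J : Fin d → ℤ) :
    |f (X + J) - f X - ∑ s, (J s : ℝ) * (f (X + Pi.single s 1) - f X)| ≤
      (1 / 2) * ((∑ s, |J s| : ℤ) : ℝ) * (((∑ s, |J s| : ℤ) : ℝ) + 1) * C := by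
  have hN : (0:ℤ) ≤ ∑ s, |J s| := Finset.sum_nonneg fun s _ => abs_nonneg _
  have hn : ((∑ s, |J s|).toNat : ℤ) = ∑ s, |J s| := Int.toNat_of_nonneg hN
  have h := main f C hC (∑ s, |J s|).toNat J X (by rw [hn])
  have hcast : (((∑ s, |J s| : ℤ) : ℝ)) = ((∑ s, |J s|).toNat : ℝ) := by
    exact_mod_cast hn.symm
  rw [hcast]
  simpa [Dop, one_div] using h
end

section
/- Let λ > 0 and let Po(λ) denote the Poisson distribution. Then Σ_{l≥0} |Po(λ){l} − Po(λ){l−1}| = 2 max_{l≥0} Po(λ){l} ≤ 1/sqrt(λ), where Po(λ){−1} := 0. In particular, the total variation distance between Po(λ) and its unit translate satisfies d_TV(Po(λ), Po(λ)*ε₁) ≤ 1/(2 sqrt(λ)). -/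
open Filter

/-- Stirling lower bound: `n! ≥ √π · √(2n) · (n/e)^n` for `n ≥ 1`. -/
lemma aux_factorial_lb (n : ℕ) (hn : 1 ≤ n) :
    Real.sqrt Real.pi * (Real.sqrt (2 * n) * ((n : ℝ) / Real.exp 1) ^ n)
      ≤ (Nat.factorial n : ℝ) := by
  have ht : Tendsto (Stirling.stirlingSeq ∘ Nat.succ) atTop (nhds (Real.sqrt Real.pi)) :=
    Stirling.tendsto_stirlingSeq_sqrt_pi.comp (tendsto_add_atTop_nat 1)
  have h1 : Real.sqrt Real.pi ≤ Stirling.stirlingSeq n := by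
    obtain ⟨k, rfl⟩ : ∃ k, n = k + 1 := ⟨n - 1, by omega⟩
    exact Stirling.stirlingSeq'_antitone.le_of_tendsto ht k
  have hd : (0 : ℝ) < Real.sqrt (2 * n) * ((n : ℝ) / Real.exp 1) ^ n := by
    have h0 : (0 : ℝ) < (n : ℝ) := by exact_mod_cast hn
    positivity
  rw [Stirling.stirlingSeq, le_div_iff₀ hd] at h1
  exact h1

/-- The maximal value of the Poisson pmf is at most `1/(2√λ)`. -/
lemma aux_mode_bound (lam : ℝ) (hlam : 0 < lam) (m : ℕ) (hmle : (m : ℝ) ≤ lam)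
    (hmlt : lam < (m : ℝ) + 1) :
    Real.exp (-lam) * lam ^ m / (Nat.factorial m : ℝ) ≤ 1 / (2 * Real.sqrt lam) := by
  have hsq : 0 < Real.sqrt lam := Real.sqrt_pos.mpr hlam
  have hss : Real.sqrt lam ^ 2 = lam := Real.sq_sqrt hlam.le
  rcases Nat.lt_or_ge m 2 with h2 | h2
  · -- small cases m = 0, 1
    have hexp : 1 + lam + lam ^ 2 / 2 + lam ^ 3 / 6 ≤ Real.exp lam := by
      have h := Real.sum_le_exp_of_nonneg hlam.le 4
      simp [Finset.sum_range_succ, Nat.factorial] at h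
      nlinarith [h]
    interval_cases m
    · -- m = 0, lam < 1
      have hkey : 2 * Real.sqrt lam ≤ Real.exp lam := by
        nlinarith [Real.sqrt_nonneg lam, sq_nonneg (Real.sqrt lam - 1)]
      simp only [pow_zero, Nat.factorial_zero, Nat.cast_one, mul_one]
      rw [Real.exp_neg, inv_eq_one_div, div_one,
        div_le_div_iff₀ (Real.exp_pos _) (by positivity)]
      nlinarith [hkey]
    · -- m = 1, 1 ≤ lam < 2
      have hl1 : (1 : ℝ) ≤ lam := by exact_mod_cast hmle
      have hl2 : lam < 2 := by push_cast at hmlt; linarith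
      have hkey : 2 * lam * Real.sqrt lam ≤ Real.exp lam := by
        have h1 : 2 * lam * Real.sqrt lam ≤ lam + lam ^ 2 := by
          nlinarith [sq_nonneg (Real.sqrt lam * (Real.sqrt lam - 1)), Real.sqrt_nonneg lam]
        have h2' : lam + lam ^ 2 ≤ 1 + lam + lam ^ 2 / 2 + lam ^ 3 / 6 := by
          nlinarith [mul_nonneg (sq_nonneg (lam - 2)) (by linarith : (0:ℝ) ≤ lam + 1)]
        linarith
      simp only [pow_one, Nat.factorial_one, Nat.cast_one]
      rw [Real.exp_neg, div_one, inv_mul_eq_div,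
        div_le_div_iff₀ (Real.exp_pos _) (by positivity)]
      nlinarith [hkey]
  · -- m ≥ 2, use Stirling
    have hm0 : (0 : ℝ) < (m : ℝ) := by
      have : (0:ℕ) < m := by omega
      exact_mod_cast this
    have hm2 : (2 : ℝ) ≤ (m : ℝ) := by exact_mod_cast h2
    have hfact := aux_factorial_lb m (by omega)
    have hD : (0 : ℝ) < Real.sqrt Real.pi * (Real.sqrt (2 * m) * ((m : ℝ) / Real.exp 1) ^ m) := by
      have hpi := Real.pi_pos
      positivity
    have h1 : Real.exp (-lam) * lam ^ m / (Nat.factorial m : ℝ)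
        ≤ Real.exp (-lam) * lam ^ m
          / (Real.sqrt Real.pi * (Real.sqrt (2 * m) * ((m : ℝ) / Real.exp 1) ^ m)) :=
      div_le_div_of_nonneg_left (by positivity) hD hfact
    have hkey : Real.exp (-lam) * lam ^ m / (((m : ℝ) / Real.exp 1) ^ m) ≤ 1 := by
      have hlog : Real.log (lam / m) ≤ lam / m - 1 :=
        Real.log_le_sub_one_of_pos (by positivity)
      have hld : Real.log (lam / m) = Real.log lam - Real.log m :=
        Real.log_div hlam.ne' hm0.ne'
      have hmm : (m : ℝ) * (lam / m - 1) = lam - m := by field_simp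
      have hmul : (m : ℝ) * Real.log (lam / m) ≤ lam - m := by
        calc (m : ℝ) * Real.log (lam / m) ≤ (m : ℝ) * (lam / m - 1) :=
              mul_le_mul_of_nonneg_left hlog hm0.le
          _ = lam - m := hmm
      have e1 : lam ^ m = Real.exp ((m : ℝ) * Real.log lam) := by
        rw [Real.exp_nat_mul, Real.exp_log hlam]
      have e2 : ((m : ℝ) / Real.exp 1) ^ m = Real.exp ((m : ℝ) * (Real.log m - 1)) := by
        rw [Real.exp_nat_mul, Real.exp_sub, Real.exp_log hm0]
      rw [e1, e2, ← Real.exp_add, ← Real.exp_sub]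
      rw [Real.exp_le_one_iff]
      have : (m : ℝ) * Real.log lam - (m : ℝ) * Real.log m ≤ lam - m := by
        have := hmul
        rw [hld] at this
        linarith [this]
      nlinarith [this]
    have h3 : Real.exp (-lam) * lam ^ m
        / (Real.sqrt Real.pi * (Real.sqrt (2 * m) * ((m : ℝ) / Real.exp 1) ^ m))
        ≤ 1 / (Real.sqrt Real.pi * Real.sqrt (2 * m)) := by
      have heq : Real.exp (-lam) * lam ^ m
          / (Real.sqrt Real.pi * (Real.sqrt (2 * m) * ((m : ℝ) / Real.exp 1) ^ m))
          = (Real.exp (-lam) * lam ^ m / (((m : ℝ) / Real.exp 1) ^ m))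
            / (Real.sqrt Real.pi * Real.sqrt (2 * m)) := by
        field_simp
      rw [heq]
      have hc : (0 : ℝ) < Real.sqrt Real.pi * Real.sqrt (2 * m) := by
        have hpi := Real.pi_pos
        positivity
      exact div_le_div_of_nonneg_right hkey hc.le |>.trans_eq rfl
    have h4 : 1 / (Real.sqrt Real.pi * Real.sqrt (2 * m)) ≤ 1 / (2 * Real.sqrt lam) := by
      apply one_div_le_one_div_of_le (by positivity)
      have hpi := Real.pi_gt_three
      have hle4 : (4 : ℝ) * lam ≤ Real.pi * (2 * m) := by nlinarith
      calc 2 * Real.sqrt lam = Real.sqrt (4 * lam) := by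
            rw [show (4 : ℝ) * lam = 2 ^ 2 * lam by ring, Real.sqrt_mul (by norm_num),
              Real.sqrt_sq (by norm_num : (0:ℝ) ≤ 2)]
        _ ≤ Real.sqrt (Real.pi * (2 * m)) := Real.sqrt_le_sqrt hle4
        _ = Real.sqrt Real.pi * Real.sqrt (2 * m) := Real.sqrt_mul Real.pi_pos.le _
    exact h1.trans (h3.trans h4)

/-- For the Poisson distribution `Po(λ)` with `λ > 0`, the sum of absolute successive
differences of its pmf equals twice its maximum value and is at most `1/√λ`; in
particular `d_TV(Po(λ), Po(λ)∗ε₁) ≤ 1/(2√λ)`. -/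
theorem stmt_15 (lam : ℝ) (hlam : 0 < lam)
    (p q : ℕ → ℝ)
    (hp : ∀ l : ℕ, p l = Real.exp (-lam) * lam ^ l / Nat.factorial l)
    (hq0 : q 0 = 0) (hq : ∀ l : ℕ, q (l + 1) = p l) :
    (∑' l : ℕ, |p l - q l|) = 2 * (⨆ l : ℕ, p l) ∧
    2 * (⨆ l : ℕ, p l) ≤ 1 / Real.sqrt lam ∧
    (1 / 2) * ∑' l : ℕ, |p l - q l| ≤ 1 / (2 * Real.sqrt lam) := by
  have hsq : 0 < Real.sqrt lam := Real.sqrt_pos.mpr hlam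
  set m := Nat.floor lam with hmdef
  have hmle : (m : ℝ) ≤ lam := Nat.floor_le hlam.le
  have hmlt : lam < (m : ℝ) + 1 := Nat.lt_floor_add_one lam
  have hppos : ∀ l, 0 < p l := by
    intro l; rw [hp]; positivity
  have hstep : ∀ l : ℕ, p (l + 1) = p l * (lam / ((l : ℝ) + 1)) := by
    intro l
    rw [hp, hp, Nat.factorial_succ]
    have h1 : ((l : ℝ) + 1) ≠ 0 := by positivity
    have h2 : ((Nat.factorial l : ℝ)) ≠ 0 := by positivity
    push_cast
    field_simp
    ring
  have hmono : ∀ l : ℕ, (l : ℝ) + 1 ≤ lam → p l ≤ p (l + 1) := by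
    intro l hl
    rw [hstep l]
    nth_rewrite 1 [← mul_one (p l)]
    apply mul_le_mul_of_nonneg_left _ (hppos l).le
    rw [le_div_iff₀ (by positivity)]
    linarith
  have hanti : ∀ l : ℕ, lam ≤ (l : ℝ) + 1 → p (l + 1) ≤ p l := by
    intro l hl
    rw [hstep l]
    nth_rewrite 2 [← mul_one (p l)]
    apply mul_le_mul_of_nonneg_left _ (hppos l).le
    rw [div_le_one (by positivity)]
    linarith
  -- p is maximized at m
  have hup : ∀ j : ℕ, p (m - j) ≤ p m := by
    intro j
    induction j with
    | zero => simp
    | succ n ih =>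
      by_cases h : n + 1 ≤ m
      · have e : m - (n + 1) + 1 = m - n := by omega
        have hc : ((m - (n + 1) : ℕ) : ℝ) + 1 ≤ lam := by
          have e2 : ((m - (n + 1) : ℕ) : ℝ) + 1 = ((m - n : ℕ) : ℝ) := by
            exact_mod_cast congrArg (Nat.cast : ℕ → ℝ) e
          rw [e2]
          exact le_trans (by exact_mod_cast Nat.cast_le.mpr (Nat.sub_le m n)) hmle
        calc p (m - (n + 1)) ≤ p (m - (n + 1) + 1) := hmono _ hc
          _ = p (m - n) := by rw [e]
          _ ≤ p m := ih
      · have e : m - (n + 1) = m - n := by omega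
        rw [e]; exact ih
  have hdown : ∀ j : ℕ, p (m + j) ≤ p m := by
    intro j
    induction j with
    | zero => simp
    | succ n ih =>
      have hc : lam ≤ ((m + n : ℕ) : ℝ) + 1 := by
        push_cast
        linarith [hmlt, (by positivity : (0:ℝ) ≤ (n:ℝ))]
      calc p (m + (n + 1)) = p ((m + n) + 1) := by ring_nf
        _ ≤ p (m + n) := hanti _ hc
        _ ≤ p m := ih
  have hle : ∀ l, p l ≤ p m := by
    intro l
    rcases le_total l m with h | h
    · have e : l = m - (m - l) := by omega
      rw [e]; exact hup _
    · have e : l = m + (l - m) := by omega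
      rw [e]; exact hdown _
  have hbdd : BddAbove (Set.range p) := ⟨p m, by rintro x ⟨l, rfl⟩; exact hle l⟩
  have hsup : (⨆ l, p l) = p m := le_antisymm (ciSup_le hle) (le_ciSup hbdd m)
  -- partial sums over the increasing part
  have hS1 : ∀ k : ℕ, (k : ℝ) ≤ lam →
      (∑ l ∈ Finset.range (k + 1), |p l - q l|) = p k := by
    intro k
    induction k with
    | zero =>
      intro _
      simp [hq0, abs_of_nonneg (hppos 0).le]
    | succ n ih =>
      intro hk
      push_cast at hk
      have hn : (n : ℝ) ≤ lam := by linarith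
      rw [Finset.sum_range_succ, ih hn, hq,
        abs_of_nonneg (sub_nonneg.mpr (hmono n hk))]
      ring
  -- partial sums beyond m
  have hS2 : ∀ N : ℕ,
      (∑ l ∈ Finset.range (N + m + 1), |p l - q l|) = 2 * p m - p (N + m) := by
    intro N
    induction N with
    | zero =>
      simp only [Nat.zero_add, zero_add]
      rw [hS1 m hmle]; ring
    | succ N ih =>
      have e : N + 1 + m + 1 = (N + m + 1) + 1 := by omega
      rw [e, Finset.sum_range_succ, ih, hq]
      have hc : lam ≤ ((N + m : ℕ) : ℝ) + 1 := by
        push_cast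
        linarith [hmlt, (by positivity : (0:ℝ) ≤ (N:ℝ))]
      have hd : p ((N + m) + 1) ≤ p (N + m) := hanti _ hc
      rw [abs_of_nonpos (sub_nonpos.mpr hd)]
      have e2 : N + 1 + m = N + m + 1 := by omega
      rw [e2]
      ring
  -- convergence of partial sums
  have hp0 : Tendsto p atTop (nhds 0) := by
    have h := (FloorSemiring.tendsto_pow_div_factorial_atTop (K := ℝ) lam).const_mul
      (Real.exp (-lam))
    simp only [mul_zero] at h
    apply h.congr
    intro n
    rw [hp]; ring
  have htend : Tendsto (fun N => ∑ l ∈ Finset.range N, |p l - q l|) atTop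
      (nhds (2 * p m)) := by
    rw [← tendsto_add_atTop_iff_nat (m + 1)]
    have heq : (fun N => ∑ l ∈ Finset.range (N + (m + 1)), |p l - q l|)
        = fun N => 2 * p m - p (N + m) := by
      funext N
      have e : N + (m + 1) = N + m + 1 := by omega
      rw [e, hS2 N]
    rw [heq]
    have h1 : Tendsto (fun N : ℕ => p (N + m)) atTop (nhds 0) :=
      hp0.comp (tendsto_add_atTop_nat m)
    simpa using tendsto_const_nhds.sub h1
  have hsum : HasSum (fun l => |p l - q l|) (2 * p m) := by
    rw [hasSum_iff_tendsto_nat_of_nonneg (fun l => abs_nonneg _)]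
    exact htend
  have h1 : (∑' l : ℕ, |p l - q l|) = 2 * (⨆ l, p l) := by
    rw [hsum.tsum_eq, hsup]
  have hbound : p m ≤ 1 / (2 * Real.sqrt lam) := by
    rw [hp]
    exact aux_mode_bound lam hlam m hmle hmlt
  refine ⟨h1, ?_, ?_⟩
  · rw [hsup]
    have e : 1 / Real.sqrt lam = 2 * (1 / (2 * Real.sqrt lam)) := by
      field_simp
    rw [e]
    linarith
  · rw [h1, hsup]
    linarith
end
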